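/- Suppose every pair of distinct points of E lies on exactly one line of L. If a point z does not belong to a line l ∈ L, then the number of points of l is at most the number of lines through z, i.e. s_l ≤ k_z. -/

import Mathlib

theorem deBruijnErdos_inequality {α : Type*} [DecidableEq α]
    (E : Finset α) (L : Finset (Finset α)) (hL : ∀ l ∈ L, l ⊆ E)
    (hpair : ∀ x ∈ E, ∀ y ∈ E, x ≠ y → ∃! l, l ∈ L ∧ x ∈ l ∧ y ∈ l) :
    ∀ z ∈ E, ∀ l ∈ L, z ∉ l →
      l.card ≤ (L.filter (fun l' => z ∈ l')).card := by
  intro z hz l hl hzl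
  have hlE := hL l hl
  have hne : ∀ x ∈ l, z ≠ x := fun x hx he => hzl (he ▸ hx)
  apply Finset.card_le_card_of_injOn
    (fun x => if h : x ∈ l then (hpair z hz x (hlE h) (hne x h)).exists.choose else ∅)
  · intro x hx
    simp only [Finset.mem_coe] at hx
    simp only [hx, dif_pos]
    obtain ⟨h1, h2, _⟩ := (hpair z hz x (hlE hx) (hne x hx)).exists.choose_spec
    simp [Finset.mem_filter, h1, h2]
  · intro x hx y hy hxy
    simp only [Finset.mem_coe] at hx hy
    simp only [hx, hy, dif_pos] at hxy
    by_contra hne'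
    obtain ⟨hm1, hm2, hm3⟩ := (hpair z hz x (hlE hx) (hne x hx)).exists.choose_spec
    obtain ⟨hm1', hm2', hm3'⟩ := (hpair z hz y (hlE hy) (hne y hy)).exists.choose_spec
    rw [hxy] at hm3
    have huniq := hpair x (hlE hx) y (hlE hy) hne'
    have h1 := huniq.unique ⟨hm1', hm3, hm3'⟩ ⟨hl, hx, hy⟩
    rw [h1] at hm2'
    exact hzl hm2'
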